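/- Let K: (ℝ^d \ P) × ℝ^d → ℝ and K̄: ℝ^d × ℝ^d → ℝ be measurable, let |x|_∂ denote the distance from x to a fixed set P, and let ‖·‖ be a norm on ℝ^d with associated 'scaled dimension' |𝔰| (i.e. the d-dimensional volume of a ball of radius r is comparable to r^{|𝔰|}). Suppose |K(x,y)| ≤ A·(|x|_∂ + ‖x−y‖)^α ‖x−y‖^γ and |K̄(y,z)| ≤ B·‖y−z‖^{γ̄}, where γ + γ̄ > −|𝔰|, α + γ > −|𝔰|, and α + γ + γ̄ < −|𝔰|. Then the convolution K̃(x,z) = ∫ K(x,y) K̄(y,z) dy satisfies |K̃(x,z)| ≤ C·A·B·(|x|_∂ + ‖x−z‖)^{α+γ+γ̄+|𝔰|} for all x ∉ P and z ≠ x, where C depends only on the exponents and |𝔰|. -/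

import Mathlib

open Real MeasureTheory
open scoped ENNReal

/-! Auxiliary lemmas for the kernel convolution estimate. -/

private lemma kc_pow_rpow (x : ℝ) (hx : 0 ≤ x) (k : ℕ) (t : ℝ) :
    (x ^ k) ^ t = (x ^ t) ^ k := by
  rw [← Real.rpow_natCast x k, ← Real.rpow_natCast (x ^ t) k, ← Real.rpow_mul hx,
    ← Real.rpow_mul hx, mul_comm]

private lemma kc_tsum_ofReal_le (t : ℕ → ℝ) (S : ℝ)
    (h0 : ∀ k, 0 ≤ t k) (h : ∀ F : Finset ℕ, ∑ k ∈ F, t k ≤ S) :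
    ∑' k, ENNReal.ofReal (t k) ≤ ENNReal.ofReal S := by
  rw [ENNReal.tsum_eq_iSup_sum]
  refine iSup_le fun F => ?_
  rw [← ENNReal.ofReal_sum_of_nonneg fun i _ => h0 i]
  exact ENNReal.ofReal_le_ofReal (h F)

private lemma kc_geom_finset (ρ M : ℝ) (h0 : 0 ≤ ρ) (h1 : ρ < 1) (hM : 0 ≤ M)
    (F : Finset ℕ) : ∑ k ∈ F, M * ρ ^ k ≤ M * (1 - ρ)⁻¹ := by
  rw [← Finset.mul_sum]
  refine mul_le_mul_of_nonneg_left ?_ hM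
  calc ∑ k ∈ F, ρ ^ k ≤ ∑' k : ℕ, ρ ^ k :=
        Summable.sum_le_tsum F (fun i _ => by positivity) (summable_geometric_of_lt_one h0 h1)
    _ = (1 - ρ)⁻¹ := tsum_geometric_of_lt_one h0 h1

private lemma kc_min_sum (p e : ℝ) (hp : 0 < p) (he : e < 0) (c : ℝ) (hc : 0 < c)
    (F : Finset ℕ) :
    ∑ k ∈ F, min ((c * 2 ^ k) ^ p) ((c * 2 ^ k) ^ e)
      ≤ (1 - (1/2 : ℝ) ^ p)⁻¹ + (1 - (2 : ℝ) ^ e)⁻¹ := by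
  classical
  have hρp0 : (0:ℝ) ≤ (1/2 : ℝ) ^ p := Real.rpow_nonneg (by norm_num) _
  have hρp1 : (1/2 : ℝ) ^ p < 1 := Real.rpow_lt_one (by norm_num) (by norm_num) hp
  have hρe0 : (0:ℝ) ≤ (2 : ℝ) ^ e := Real.rpow_nonneg (by norm_num) _
  have hρe1 : (2 : ℝ) ^ e < 1 := Real.rpow_lt_one_of_one_lt_of_neg one_lt_two he
  have hex : ∃ n : ℕ, 1 ≤ c * 2 ^ n := by
    obtain ⟨n, hn⟩ := pow_unbounded_of_one_lt (1 / c) (by norm_num : (1:ℝ) < 2)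
    refine ⟨n, ?_⟩
    rw [div_lt_iff₀ hc] at hn
    nlinarith
  set K := Nat.find hex with hKdef
  have hK : 1 ≤ c * 2 ^ K := Nat.find_spec hex
  have hsplit := Finset.sum_filter_add_sum_filter_not F (· < K)
    (fun k => min ((c * 2 ^ k) ^ p) ((c * 2 ^ k) ^ e))
  rw [← hsplit]
  have piece1 : ∑ k ∈ F.filter (· < K), min ((c * 2 ^ k) ^ p) ((c * 2 ^ k) ^ e)
      ≤ (1 - (1/2 : ℝ) ^ p)⁻¹ := by
    have hterm : ∀ k ∈ F.filter (· < K),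
        min ((c * 2 ^ k) ^ p) ((c * 2 ^ k) ^ e) ≤ ((1/2 : ℝ) ^ p) ^ (K - 1 - k) := by
      intro k hk
      have hkK : k < K := by simpa using (Finset.mem_filter.mp hk).2
      have hmin : ¬ (1 ≤ c * 2 ^ (K - 1)) := Nat.find_min hex (by omega)
      push_neg at hmin
      have hbase : c * 2 ^ k ≤ (1/2 : ℝ) ^ (K - 1 - k) := by
        have h2 : (2:ℝ) ^ k * (2:ℝ) ^ (K - 1 - k) = 2 ^ (K - 1) := by
          rw [← pow_add]; congr 1; omega
        have hpos : (0:ℝ) < 2 ^ (K - 1 - k) := by positivity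
        have hhalf : ((1/2 : ℝ)) ^ (K - 1 - k) = 1 / (2:ℝ) ^ (K - 1 - k) := by
          rw [div_pow, one_pow]
        rw [hhalf, le_div_iff₀ hpos, mul_assoc, h2]
        exact hmin.le
      calc min ((c * 2 ^ k) ^ p) ((c * 2 ^ k) ^ e) ≤ (c * 2 ^ k) ^ p := min_le_left _ _
        _ ≤ ((1/2 : ℝ) ^ (K - 1 - k)) ^ p := Real.rpow_le_rpow (by positivity) hbase hp.le
        _ = ((1/2 : ℝ) ^ p) ^ (K - 1 - k) := kc_pow_rpow _ (by norm_num) _ _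
    calc ∑ k ∈ F.filter (· < K), min ((c * 2 ^ k) ^ p) ((c * 2 ^ k) ^ e)
        ≤ ∑ k ∈ F.filter (· < K), ((1/2 : ℝ) ^ p) ^ (K - 1 - k) := Finset.sum_le_sum hterm
      _ ≤ ∑ k ∈ Finset.range K, ((1/2 : ℝ) ^ p) ^ (K - 1 - k) := by
          refine Finset.sum_le_sum_of_subset_of_nonneg ?_ fun _ _ _ => by positivity
          intro k hk
          exact Finset.mem_range.mpr (by simpa using (Finset.mem_filter.mp hk).2)
      _ = ∑ j ∈ Finset.range K, ((1/2 : ℝ) ^ p) ^ j :=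
          Finset.sum_range_reflect (fun j => ((1/2 : ℝ) ^ p) ^ j) K
      _ ≤ ∑' j : ℕ, ((1/2 : ℝ) ^ p) ^ j :=
          Summable.sum_le_tsum _ (fun _ _ => by positivity) (summable_geometric_of_lt_one hρp0 hρp1)
      _ = (1 - (1/2 : ℝ) ^ p)⁻¹ := tsum_geometric_of_lt_one hρp0 hρp1
  have piece2 : ∑ k ∈ F.filter (¬ · < K), min ((c * 2 ^ k) ^ p) ((c * 2 ^ k) ^ e)
      ≤ (1 - (2 : ℝ) ^ e)⁻¹ := by
    have hterm : ∀ k ∈ F.filter (¬ · < K),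
        min ((c * 2 ^ k) ^ p) ((c * 2 ^ k) ^ e) ≤ ((2 : ℝ) ^ e) ^ (k - K) := by
      intro k hk
      have hkK : K ≤ k := by
        have := (Finset.mem_filter.mp hk).2
        simp at this; omega
      have hbase : (2:ℝ) ^ (k - K) ≤ c * 2 ^ k := by
        have h2 : (2:ℝ) ^ K * (2:ℝ) ^ (k - K) = 2 ^ k := by
          rw [← pow_add]; congr 1; omega
        have hpos : (0:ℝ) < 2 ^ (k - K) := by positivity
        nlinarith
      calc min ((c * 2 ^ k) ^ p) ((c * 2 ^ k) ^ e) ≤ (c * 2 ^ k) ^ e := min_le_right _ _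
        _ ≤ ((2:ℝ) ^ (k - K)) ^ e :=
            Real.rpow_le_rpow_of_nonpos (by positivity) hbase he.le
        _ = ((2 : ℝ) ^ e) ^ (k - K) := kc_pow_rpow _ (by norm_num) _ _
    have hinj : ∀ x ∈ F.filter (¬ · < K), ∀ y ∈ F.filter (¬ · < K),
        x - K = y - K → x = y := by
      intro x hx y hy hxy
      have hx' := (Finset.mem_filter.mp hx).2
      have hy' := (Finset.mem_filter.mp hy).2
      simp at hx' hy'; omega
    calc ∑ k ∈ F.filter (¬ · < K), min ((c * 2 ^ k) ^ p) ((c * 2 ^ k) ^ e)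
        ≤ ∑ k ∈ F.filter (¬ · < K), ((2 : ℝ) ^ e) ^ (k - K) := Finset.sum_le_sum hterm
      _ = ∑ j ∈ (F.filter (¬ · < K)).image (· - K), ((2 : ℝ) ^ e) ^ j :=
          (Finset.sum_image hinj).symm
      _ ≤ ∑' j : ℕ, ((2 : ℝ) ^ e) ^ j :=
          Summable.sum_le_tsum _ (fun _ _ => by positivity) (summable_geometric_of_lt_one hρe0 hρe1)
      _ = (1 - (2 : ℝ) ^ e)⁻¹ := tsum_geometric_of_lt_one hρe0 hρe1
  exact add_le_add piece1 piece2

/-- Region A sum estimate: near the singularity `y = x`. -/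
private lemma kc_sumA (sdim α γ γ' c₂ : ℝ) (hc₂ : 0 < c₂)
    (hα : α ≤ 0) (hγ' : γ' ≤ 0)
    (hq1 : 0 < α + γ + sdim) (hp : 0 < γ + γ' + sdim) :
    ∃ CA : ℝ, 0 < CA ∧ ∀ a r : ℝ, 0 ≤ a → 0 < r → ∀ F : Finset ℕ,
      ∑ k ∈ F, ((a + r * (1/2 : ℝ) ^ (k+2)) ^ α * (r * (1/2 : ℝ) ^ (k+2)) ^ γ
            * (r/2) ^ γ') * (c₂ * (r * (1/2 : ℝ) ^ (k+1)) ^ sdim)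
        ≤ CA * (a + r) ^ (α + γ + γ' + sdim) := by
  set ρ : ℝ := (1/2 : ℝ) ^ (α + γ + sdim) with hρdef
  have hρ0 : 0 < ρ := Real.rpow_pos_of_pos (by norm_num) _
  have hρ1 : ρ < 1 := Real.rpow_lt_one (by norm_num) (by norm_num) hq1
  set D : ℝ := c₂ * ((1/2 : ℝ) ^ α * (1/2 : ℝ) ^ α * (1/4 : ℝ) ^ γ * (1/2 : ℝ) ^ γ'
    * (1/2 : ℝ) ^ sdim) with hDdef
  have hD0 : 0 < D := by positivity
  have hinv0 : 0 < (1 - ρ)⁻¹ := inv_pos.mpr (by linarith)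
  refine ⟨D * (1 - ρ)⁻¹, mul_pos hD0 hinv0, ?_⟩
  intro a r ha hr F
  have hw0 : 0 < a + r := by positivity
  have key : ∀ k : ℕ, ((a + r * (1/2 : ℝ) ^ (k+2)) ^ α * (r * (1/2 : ℝ) ^ (k+2)) ^ γ
            * (r/2) ^ γ') * (c₂ * (r * (1/2 : ℝ) ^ (k+1)) ^ sdim)
        ≤ (D * (a + r) ^ (α + γ + γ' + sdim)) * ρ ^ k := by
    intro k
    set Q : ℝ := (1/2 : ℝ) ^ k with hQdef
    have hQ0 : 0 < Q := by positivity
    have hQ1 : Q ≤ 1 := pow_le_one₀ (by norm_num) (by norm_num)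
    have e2 : (1/2 : ℝ) ^ (k+2) = Q * (1/4) := by
      rw [hQdef, pow_add]; norm_num
    have e1 : (1/2 : ℝ) ^ (k+1) = Q * (1/2) := by
      rw [hQdef, pow_add]; norm_num
    have hs1 : (a + r * ((1/2 : ℝ) ^ (k+2))) ^ α
        ≤ (Q * (1/2)) ^ α * ((a + r) * (1/2)) ^ α := by
      have hb : (Q * (1/2)) * ((a + r) * (1/2)) ≤ a + r * ((1/2:ℝ) ^ (k+2)) := by
        rw [e2]; nlinarith
      calc (a + r * ((1/2 : ℝ) ^ (k+2))) ^ α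
          ≤ ((Q * (1/2)) * ((a + r) * (1/2))) ^ α :=
            Real.rpow_le_rpow_of_nonpos (by positivity) hb hα
        _ = (Q * (1/2)) ^ α * ((a + r) * (1/2)) ^ α :=
            Real.mul_rpow (by positivity) (by positivity)
    calc ((a + r * (1/2 : ℝ) ^ (k+2)) ^ α * (r * (1/2 : ℝ) ^ (k+2)) ^ γ * (r/2) ^ γ')
            * (c₂ * (r * (1/2 : ℝ) ^ (k+1)) ^ sdim)
        ≤ (((Q * (1/2)) ^ α * ((a + r) * (1/2)) ^ α) * (r * (1/2 : ℝ) ^ (k+2)) ^ γ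
            * (r/2) ^ γ') * (c₂ * (r * (1/2 : ℝ) ^ (k+1)) ^ sdim) := by
          refine mul_le_mul_of_nonneg_right ?_ (by positivity)
          refine mul_le_mul_of_nonneg_right ?_ (by positivity)
          exact mul_le_mul_of_nonneg_right hs1 (by positivity)
      _ = c₂ * (Q ^ α * Q ^ γ * Q ^ sdim) * (r ^ γ * r ^ γ' * r ^ sdim) * (a + r) ^ α
            * ((1/2 : ℝ) ^ α * (1/2 : ℝ) ^ α * (1/4 : ℝ) ^ γ * (1/2 : ℝ) ^ γ'
              * (1/2 : ℝ) ^ sdim) := by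
          rw [e2, e1]
          rw [Real.mul_rpow hQ0.le (by norm_num : (0:ℝ) ≤ 1/2),
            Real.mul_rpow hw0.le (by norm_num : (0:ℝ) ≤ 1/2),
            show r * (Q * (1/4)) = r * Q * (1/4) by ring,
            Real.mul_rpow (by positivity) (by norm_num : (0:ℝ) ≤ 1/4),
            Real.mul_rpow hr.le hQ0.le,
            show r * (Q * (1/2)) = r * Q * (1/2) by ring,
            Real.mul_rpow (by positivity) (by norm_num : (0:ℝ) ≤ 1/2),
            Real.mul_rpow hr.le hQ0.le,
            show (r/2 : ℝ) = r * (1/2) by ring,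
            Real.mul_rpow hr.le (by norm_num : (0:ℝ) ≤ 1/2)]
          ring
      _ = D * (ρ ^ k * (r ^ (γ + γ' + sdim) * (a + r) ^ α)) := by
          rw [← Real.rpow_add hQ0, ← Real.rpow_add hQ0,
            ← Real.rpow_add hr, ← Real.rpow_add hr, hQdef,
            kc_pow_rpow (1/2 : ℝ) (by norm_num) k (α + γ + sdim), ← hρdef, hDdef]
          ring
      _ ≤ D * (ρ ^ k * ((a + r) ^ (γ + γ' + sdim) * (a + r) ^ α)) := by
          refine mul_le_mul_of_nonneg_left ?_ hD0.le
          refine mul_le_mul_of_nonneg_left ?_ (by positivity)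
          refine mul_le_mul_of_nonneg_right ?_ (by positivity)
          exact Real.rpow_le_rpow hr.le (by linarith) hp.le
      _ = (D * (a + r) ^ (α + γ + γ' + sdim)) * ρ ^ k := by
          rw [← Real.rpow_add hw0, show γ + γ' + sdim + α = α + γ + γ' + sdim by ring]
          ring
  calc ∑ k ∈ F, ((a + r * (1/2 : ℝ) ^ (k+2)) ^ α * (r * (1/2 : ℝ) ^ (k+2)) ^ γ
            * (r/2) ^ γ') * (c₂ * (r * (1/2 : ℝ) ^ (k+1)) ^ sdim)
      ≤ ∑ k ∈ F, (D * (a + r) ^ (α + γ + γ' + sdim)) * ρ ^ k :=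
        Finset.sum_le_sum fun k _ => key k
    _ ≤ (D * (a + r) ^ (α + γ + γ' + sdim)) * (1 - ρ)⁻¹ :=
        kc_geom_finset ρ _ hρ0.le hρ1 (by positivity) F
    _ = (D * (1 - ρ)⁻¹) * (a + r) ^ (α + γ + γ' + sdim) := by ring

/-- Region B sum estimate: near the singularity `y = z`. -/
private lemma kc_sumB (sdim α γ γ' c₂ : ℝ) (hc₂ : 0 < c₂)
    (hα : α ≤ 0)
    (hq2 : 0 < γ' + sdim) (hp : 0 < γ + γ' + sdim) :
    ∃ CB : ℝ, 0 < CB ∧ ∀ a r : ℝ, 0 ≤ a → 0 < r → ∀ F : Finset ℕ,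
      ∑ k ∈ F, ((a + r/2) ^ α * (r/2) ^ γ * (r * (1/2 : ℝ) ^ (k+2)) ^ γ')
            * (c₂ * (r * (1/2 : ℝ) ^ (k+1)) ^ sdim)
        ≤ CB * (a + r) ^ (α + γ + γ' + sdim) := by
  set ρ : ℝ := (1/2 : ℝ) ^ (γ' + sdim) with hρdef
  have hρ0 : 0 < ρ := Real.rpow_pos_of_pos (by norm_num) _
  have hρ1 : ρ < 1 := Real.rpow_lt_one (by norm_num) (by norm_num) hq2
  set D : ℝ := c₂ * ((1/2 : ℝ) ^ α * (1/2 : ℝ) ^ γ * (1/4 : ℝ) ^ γ' * (1/2 : ℝ) ^ sdim)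
    with hDdef
  have hD0 : 0 < D := by positivity
  have hinv0 : 0 < (1 - ρ)⁻¹ := inv_pos.mpr (by linarith)
  refine ⟨D * (1 - ρ)⁻¹, mul_pos hD0 hinv0, ?_⟩
  intro a r ha hr F
  have hw0 : 0 < a + r := by positivity
  have key : ∀ k : ℕ, ((a + r/2) ^ α * (r/2) ^ γ * (r * (1/2 : ℝ) ^ (k+2)) ^ γ')
            * (c₂ * (r * (1/2 : ℝ) ^ (k+1)) ^ sdim)
        ≤ (D * (a + r) ^ (α + γ + γ' + sdim)) * ρ ^ k := by
    intro k
    set Q : ℝ := (1/2 : ℝ) ^ k with hQdef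
    have hQ0 : 0 < Q := by positivity
    have e2 : (1/2 : ℝ) ^ (k+2) = Q * (1/4) := by rw [hQdef, pow_add]; norm_num
    have e1 : (1/2 : ℝ) ^ (k+1) = Q * (1/2) := by rw [hQdef, pow_add]; norm_num
    have hs1 : (a + r/2) ^ α ≤ ((a + r) * (1/2)) ^ α :=
      Real.rpow_le_rpow_of_nonpos (by positivity) (by linarith) hα
    calc ((a + r/2) ^ α * (r/2) ^ γ * (r * (1/2 : ℝ) ^ (k+2)) ^ γ')
            * (c₂ * (r * (1/2 : ℝ) ^ (k+1)) ^ sdim)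
        ≤ (((a + r) * (1/2)) ^ α * (r/2) ^ γ * (r * (1/2 : ℝ) ^ (k+2)) ^ γ')
            * (c₂ * (r * (1/2 : ℝ) ^ (k+1)) ^ sdim) := by
          refine mul_le_mul_of_nonneg_right ?_ (by positivity)
          refine mul_le_mul_of_nonneg_right ?_ (by positivity)
          exact mul_le_mul_of_nonneg_right hs1 (by positivity)
      _ = c₂ * (Q ^ γ' * Q ^ sdim) * (r ^ γ * r ^ γ' * r ^ sdim) * (a + r) ^ α
            * ((1/2 : ℝ) ^ α * (1/2 : ℝ) ^ γ * (1/4 : ℝ) ^ γ' * (1/2 : ℝ) ^ sdim) := by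
          rw [e2, e1]
          rw [Real.mul_rpow hw0.le (by norm_num : (0:ℝ) ≤ 1/2),
            show r * (Q * (1/4)) = r * Q * (1/4) by ring,
            Real.mul_rpow (by positivity) (by norm_num : (0:ℝ) ≤ 1/4),
            Real.mul_rpow hr.le hQ0.le,
            show r * (Q * (1/2)) = r * Q * (1/2) by ring,
            Real.mul_rpow (by positivity) (by norm_num : (0:ℝ) ≤ 1/2),
            Real.mul_rpow hr.le hQ0.le,
            show (r/2 : ℝ) = r * (1/2) by ring,
            Real.mul_rpow hr.le (by norm_num : (0:ℝ) ≤ 1/2)]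
          ring
      _ = D * (ρ ^ k * (r ^ (γ + γ' + sdim) * (a + r) ^ α)) := by
          rw [← Real.rpow_add hQ0, ← Real.rpow_add hr, ← Real.rpow_add hr, hQdef,
            kc_pow_rpow (1/2 : ℝ) (by norm_num) k (γ' + sdim), ← hρdef, hDdef]
          ring
      _ ≤ D * (ρ ^ k * ((a + r) ^ (γ + γ' + sdim) * (a + r) ^ α)) := by
          refine mul_le_mul_of_nonneg_left ?_ hD0.le
          refine mul_le_mul_of_nonneg_left ?_ (by positivity)
          refine mul_le_mul_of_nonneg_right ?_ (by positivity)
          exact Real.rpow_le_rpow hr.le (by linarith) hp.le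
      _ = (D * (a + r) ^ (α + γ + γ' + sdim)) * ρ ^ k := by
          rw [← Real.rpow_add hw0, show γ + γ' + sdim + α = α + γ + γ' + sdim by ring]
          ring
  calc ∑ k ∈ F, ((a + r/2) ^ α * (r/2) ^ γ * (r * (1/2 : ℝ) ^ (k+2)) ^ γ')
            * (c₂ * (r * (1/2 : ℝ) ^ (k+1)) ^ sdim)
      ≤ ∑ k ∈ F, (D * (a + r) ^ (α + γ + γ' + sdim)) * ρ ^ k :=
        Finset.sum_le_sum fun k _ => key k
    _ ≤ (D * (a + r) ^ (α + γ + γ' + sdim)) * (1 - ρ)⁻¹ :=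
        kc_geom_finset ρ _ hρ0.le hρ1 (by positivity) F
    _ = (D * (1 - ρ)⁻¹) * (a + r) ^ (α + γ + γ' + sdim) := by ring

/-- Region C sum estimate: away from both singularities. -/
private lemma kc_sumC (sdim α γ γ' c₂ : ℝ) (hc₂ : 0 < c₂)
    (hα : α ≤ 0)
    (hp : 0 < γ + γ' + sdim) (he : α + γ + γ' + sdim < 0) :
    ∃ CC : ℝ, 0 < CC ∧ ∀ a r : ℝ, 0 ≤ a → 0 < r → ∀ F : Finset ℕ,
      ∑ k ∈ F, ((a + r/2 * 2 ^ k) ^ α * (r/2 * 2 ^ k) ^ γ * (r/2 * 2 ^ k / 4) ^ γ')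
            * (c₂ * (r/2 * 2 ^ (k+1)) ^ sdim)
        ≤ CC * (a + r) ^ (α + γ + γ' + sdim) := by
  set p : ℝ := γ + γ' + sdim with hpdef
  set e : ℝ := α + γ + γ' + sdim with hedef
  set D : ℝ := c₂ * ((1/4 : ℝ) ^ γ' * (2 : ℝ) ^ sdim * (1/2 : ℝ) ^ α) with hDdef
  have hD0 : 0 < D := by positivity
  have hSG1 : (0:ℝ) < (1 - (1/2 : ℝ) ^ p)⁻¹ := by
    have : (1/2 : ℝ) ^ p < 1 := Real.rpow_lt_one (by norm_num) (by norm_num) hp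
    exact inv_pos.mpr (by linarith)
  have hSG2 : (0:ℝ) < (1 - (2 : ℝ) ^ e)⁻¹ := by
    have : (2 : ℝ) ^ e < 1 := Real.rpow_lt_one_of_one_lt_of_neg one_lt_two (by linarith)
    exact inv_pos.mpr (by linarith)
  refine ⟨D * ((1 - (1/2 : ℝ) ^ p)⁻¹ + (1 - (2 : ℝ) ^ e)⁻¹),
    mul_pos hD0 (by linarith), ?_⟩
  intro a r ha hr F
  have hw0 : 0 < a + r := by positivity
  have hone_le : (1:ℝ) ≤ (1/2 : ℝ) ^ α :=
    Real.one_le_rpow_of_pos_of_le_one_of_nonpos (by norm_num) (by norm_num) hα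
  have key : ∀ k : ℕ, ((a + r/2 * 2 ^ k) ^ α * (r/2 * 2 ^ k) ^ γ * (r/2 * 2 ^ k / 4) ^ γ')
            * (c₂ * (r/2 * 2 ^ (k+1)) ^ sdim)
        ≤ (D * (a + r) ^ e)
          * min ((r/(2*(a+r)) * 2 ^ k) ^ p) ((r/(2*(a+r)) * 2 ^ k) ^ e) := by
    intro k
    set L : ℝ := r/2 * 2 ^ k with hLdef
    have hL0 : 0 < L := by positivity
    set X : ℝ := r/(2*(a+r)) * 2 ^ k with hXdef
    have hX0 : 0 < X := by positivity
    have hLX : L = (a + r) * X := by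
      rw [hLdef, hXdef]; field_simp
    have h2k : (1:ℝ) ≤ 2 ^ k := one_le_pow₀ (by norm_num)
    have hrL : r/2 ≤ L := by
      rw [hLdef]; nlinarith
    have he4 : r/2 * 2 ^ k / 4 = L * (1/4) := by rw [hLdef]; ring
    have he2 : r/2 * 2 ^ (k+1) = L * 2 := by rw [hLdef, pow_add]; ring
    have hcomb : (a + r) ^ α * (a + r) ^ p = (a + r) ^ e := by
      rw [← Real.rpow_add hw0]
      congr 1
      rw [hpdef, hedef]; ring
    have hb1 : ((a + L) ^ α * L ^ γ * (L * (1/4)) ^ γ') * (c₂ * (L * 2) ^ sdim)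
        ≤ (D * (a + r) ^ e) * X ^ p := by
      have hs1 : (a + L) ^ α ≤ ((a + r) * (1/2)) ^ α :=
        Real.rpow_le_rpow_of_nonpos (by positivity) (by nlinarith) hα
      calc ((a + L) ^ α * L ^ γ * (L * (1/4)) ^ γ') * (c₂ * (L * 2) ^ sdim)
          ≤ (((a + r) * (1/2)) ^ α * L ^ γ * (L * (1/4)) ^ γ') * (c₂ * (L * 2) ^ sdim) := by
            refine mul_le_mul_of_nonneg_right ?_ (by positivity)
            refine mul_le_mul_of_nonneg_right ?_ (by positivity)
            exact mul_le_mul_of_nonneg_right hs1 (by positivity)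
        _ = c₂ * (L ^ γ * L ^ γ' * L ^ sdim) * (a + r) ^ α
              * ((1/2 : ℝ) ^ α * (1/4 : ℝ) ^ γ' * (2 : ℝ) ^ sdim) := by
            rw [Real.mul_rpow hw0.le (by norm_num : (0:ℝ) ≤ 1/2),
              Real.mul_rpow hL0.le (by norm_num : (0:ℝ) ≤ 1/4),
              Real.mul_rpow hL0.le (by norm_num : (0:ℝ) ≤ 2)]
            ring
        _ = D * ((a + r) ^ α * L ^ p) := by
            rw [← Real.rpow_add hL0, ← Real.rpow_add hL0, hDdef, hpdef]
            ring
        _ = (D * (a + r) ^ e) * X ^ p := by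
            rw [hLX, Real.mul_rpow hw0.le hX0.le, ← hcomb]
            ring
    have hb2 : ((a + L) ^ α * L ^ γ * (L * (1/4)) ^ γ') * (c₂ * (L * 2) ^ sdim)
        ≤ (D * (a + r) ^ e) * X ^ e := by
      have hs1 : (a + L) ^ α ≤ L ^ α :=
        Real.rpow_le_rpow_of_nonpos hL0 (by linarith) hα
      calc ((a + L) ^ α * L ^ γ * (L * (1/4)) ^ γ') * (c₂ * (L * 2) ^ sdim)
          ≤ (L ^ α * L ^ γ * (L * (1/4)) ^ γ') * (c₂ * (L * 2) ^ sdim) := by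
            refine mul_le_mul_of_nonneg_right ?_ (by positivity)
            refine mul_le_mul_of_nonneg_right ?_ (by positivity)
            exact mul_le_mul_of_nonneg_right hs1 (by positivity)
        _ = (c₂ * ((1/4 : ℝ) ^ γ' * (2 : ℝ) ^ sdim)) * L ^ e := by
            rw [Real.mul_rpow hL0.le (by norm_num : (0:ℝ) ≤ 1/4),
              Real.mul_rpow hL0.le (by norm_num : (0:ℝ) ≤ 2),
              show L ^ α * L ^ γ * (L ^ γ' * (1/4:ℝ) ^ γ') * (c₂ * (L ^ sdim * (2:ℝ) ^ sdim))
                = (c₂ * ((1/4 : ℝ) ^ γ' * (2 : ℝ) ^ sdim))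
                  * (L ^ α * L ^ γ * L ^ γ' * L ^ sdim) by ring,
              ← Real.rpow_add hL0, ← Real.rpow_add hL0, ← Real.rpow_add hL0, hedef]
        _ ≤ D * L ^ e := by
            refine mul_le_mul_of_nonneg_right ?_ (by positivity)
            rw [hDdef]
            nlinarith [Real.rpow_nonneg (show (0:ℝ) ≤ 1/4 by norm_num) γ',
              Real.rpow_nonneg (show (0:ℝ) ≤ 2 by norm_num) sdim, hc₂.le, hone_le]
        _ = (D * (a + r) ^ e) * X ^ e := by
            rw [hLX, Real.mul_rpow hw0.le hX0.le]; ring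
    have hmin := le_min hb1 hb2
    calc ((a + r/2 * 2 ^ k) ^ α * (r/2 * 2 ^ k) ^ γ * (r/2 * 2 ^ k / 4) ^ γ')
            * (c₂ * (r/2 * 2 ^ (k+1)) ^ sdim)
        = ((a + L) ^ α * L ^ γ * (L * (1/4)) ^ γ') * (c₂ * (L * 2) ^ sdim) := by
          rw [← he4, ← he2, hLdef]
      _ ≤ min ((D * (a + r) ^ e) * X ^ p) ((D * (a + r) ^ e) * X ^ e) := hmin
      _ = (D * (a + r) ^ e) * min (X ^ p) (X ^ e) := by
          rw [← mul_min_of_nonneg _ _ (by positivity : (0:ℝ) ≤ D * (a + r) ^ e)]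
  calc ∑ k ∈ F, ((a + r/2 * 2 ^ k) ^ α * (r/2 * 2 ^ k) ^ γ * (r/2 * 2 ^ k / 4) ^ γ')
            * (c₂ * (r/2 * 2 ^ (k+1)) ^ sdim)
      ≤ ∑ k ∈ F, (D * (a + r) ^ e)
          * min ((r/(2*(a+r)) * 2 ^ k) ^ p) ((r/(2*(a+r)) * 2 ^ k) ^ e) :=
        Finset.sum_le_sum fun k _ => key k
    _ = (D * (a + r) ^ e)
        * ∑ k ∈ F, min ((r/(2*(a+r)) * 2 ^ k) ^ p) ((r/(2*(a+r)) * 2 ^ k) ^ e) := by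
        rw [Finset.mul_sum]
    _ ≤ (D * (a + r) ^ e) * ((1 - (1/2 : ℝ) ^ p)⁻¹ + (1 - (2 : ℝ) ^ e)⁻¹) := by
        refine mul_le_mul_of_nonneg_left ?_ (by positivity)
        exact kc_min_sum p e hp (by linarith) (r/(2*(a+r))) (by positivity) F
    _ = (D * ((1 - (1/2 : ℝ) ^ p)⁻¹ + (1 - (2 : ℝ) ^ e)⁻¹)) * (a + r) ^ e := by ring

private lemma kc_tsum_bound {V : Type*} [MeasurableSpace V] (μ : Measure V)
    (S : ℕ → Set V) (c m : ℕ → ℝ) (hc : ∀ k, 0 ≤ c k) (hmnn : ∀ k, 0 ≤ m k)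
    (hm : ∀ k, μ (S k) ≤ ENNReal.ofReal (m k)) (B : ℝ)
    (hB : ∀ F : Finset ℕ, ∑ k ∈ F, c k * m k ≤ B) :
    ∑' k, ENNReal.ofReal (c k) * μ (S k) ≤ ENNReal.ofReal B := by
  calc ∑' k, ENNReal.ofReal (c k) * μ (S k)
      ≤ ∑' k, ENNReal.ofReal (c k * m k) := by
        refine ENNReal.tsum_le_tsum fun k => ?_
        rw [ENNReal.ofReal_mul (hc k)]
        exact mul_le_mul_right (hm k) _
    _ ≤ ENNReal.ofReal B :=
        kc_tsum_ofReal_le _ B (fun k => mul_nonneg (hc k) (hmnn k)) hB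

private lemma kc_assemble3 {V : Type*} [MeasurableSpace V] (μ : Measure V) (g : V → ℝ≥0∞)
    (S1 S2 S3 : ℕ → Set V) (c1 c2 c3 : ℕ → ℝ) (N : Set V) (hN : μ N = 0)
    (hcover : ∀ y, y ∉ N →
      (∃ k, y ∈ S1 k ∧ g y ≤ ENNReal.ofReal (c1 k)) ∨
      (∃ k, y ∈ S2 k ∧ g y ≤ ENNReal.ofReal (c2 k)) ∨
      (∃ k, y ∈ S3 k ∧ g y ≤ ENNReal.ofReal (c3 k))) :
    ∫⁻ y, g y ∂μ ≤ (∑' k, ENNReal.ofReal (c1 k) * μ (S1 k))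
      + (∑' k, ENNReal.ofReal (c2 k) * μ (S2 k))
      + (∑' k, ENNReal.ofReal (c3 k) * μ (S3 k)) := by
  have hmeas1 : ∀ k : ℕ, Measurable ((toMeasurable μ (S1 k)).indicator
      (fun _ => ENNReal.ofReal (c1 k))) := fun k =>
    measurable_const.indicator (measurableSet_toMeasurable μ _)
  have hmeas2 : ∀ k : ℕ, Measurable ((toMeasurable μ (S2 k)).indicator
      (fun _ => ENNReal.ofReal (c2 k))) := fun k =>
    measurable_const.indicator (measurableSet_toMeasurable μ _)
  have hmeas3 : ∀ k : ℕ, Measurable ((toMeasurable μ (S3 k)).indicator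
      (fun _ => ENNReal.ofReal (c3 k))) := fun k =>
    measurable_const.indicator (measurableSet_toMeasurable μ _)
  have hgF : ∀ᵐ y ∂μ, g y ≤ ∑' k,
      ((toMeasurable μ (S1 k)).indicator (fun _ => ENNReal.ofReal (c1 k)) y
        + (toMeasurable μ (S2 k)).indicator (fun _ => ENNReal.ofReal (c2 k)) y
        + (toMeasurable μ (S3 k)).indicator (fun _ => ENNReal.ofReal (c3 k)) y) := by
    refine (measure_eq_zero_iff_ae_notMem.mp hN).mono fun y hy => ?_
    rcases hcover y hy with ⟨k, hk, hgk⟩ | ⟨k, hk, hgk⟩ | ⟨k, hk, hgk⟩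
    · calc g y ≤ ENNReal.ofReal (c1 k) := hgk
        _ = (toMeasurable μ (S1 k)).indicator (fun _ => ENNReal.ofReal (c1 k)) y := by
            rw [Set.indicator_of_mem (subset_toMeasurable μ (S1 k) hk)]
        _ ≤ _ + _ + _ := le_self_add.trans le_self_add
        _ ≤ _ := ENNReal.le_tsum k
    · calc g y ≤ ENNReal.ofReal (c2 k) := hgk
        _ = (toMeasurable μ (S2 k)).indicator (fun _ => ENNReal.ofReal (c2 k)) y := by
            rw [Set.indicator_of_mem (subset_toMeasurable μ (S2 k) hk)]
        _ ≤ _ + _ + _ := le_add_self.trans le_self_add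
        _ ≤ _ := ENNReal.le_tsum k
    · calc g y ≤ ENNReal.ofReal (c3 k) := hgk
        _ = (toMeasurable μ (S3 k)).indicator (fun _ => ENNReal.ofReal (c3 k)) y := by
            rw [Set.indicator_of_mem (subset_toMeasurable μ (S3 k) hk)]
        _ ≤ _ + _ + _ := le_add_self
        _ ≤ _ := ENNReal.le_tsum k
  calc ∫⁻ y, g y ∂μ
      ≤ ∫⁻ y, ∑' k,
        ((toMeasurable μ (S1 k)).indicator (fun _ => ENNReal.ofReal (c1 k)) y
          + (toMeasurable μ (S2 k)).indicator (fun _ => ENNReal.ofReal (c2 k)) y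
          + (toMeasurable μ (S3 k)).indicator (fun _ => ENNReal.ofReal (c3 k)) y) ∂μ :=
        lintegral_mono_ae hgF
    _ = ∑' k, ∫⁻ y,
        ((toMeasurable μ (S1 k)).indicator (fun _ => ENNReal.ofReal (c1 k)) y
          + (toMeasurable μ (S2 k)).indicator (fun _ => ENNReal.ofReal (c2 k)) y
          + (toMeasurable μ (S3 k)).indicator (fun _ => ENNReal.ofReal (c3 k)) y) ∂μ :=
        lintegral_tsum fun k => (((hmeas1 k).add (hmeas2 k)).add (hmeas3 k)).aemeasurable
    _ = ∑' k, (ENNReal.ofReal (c1 k) * μ (S1 k) + ENNReal.ofReal (c2 k) * μ (S2 k)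
        + ENNReal.ofReal (c3 k) * μ (S3 k)) := by
        refine tsum_congr fun k => ?_
        rw [lintegral_add_left ((hmeas1 k).add (hmeas2 k) : Measurable fun y => _ + _),
          lintegral_add_left (hmeas1 k),
          lintegral_indicator_const (measurableSet_toMeasurable μ _),
          lintegral_indicator_const (measurableSet_toMeasurable μ _),
          lintegral_indicator_const (measurableSet_toMeasurable μ _),
          measure_toMeasurable, measure_toMeasurable, measure_toMeasurable]
    _ = _ := by rw [ENNReal.tsum_add, ENNReal.tsum_add]

set_option maxHeartbeats 2000000 in
/-- Main integral estimate, independent of the kernels. -/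
private lemma kc_main (d : ℕ) (sdim : ℝ) (hsdim : 0 < sdim)
    (nrm : (Fin d → ℝ) → ℝ)
    (hn0 : nrm 0 = 0) (hnpos : ∀ x : Fin d → ℝ, x ≠ 0 → 0 < nrm x)
    (hnsymm : ∀ x : Fin d → ℝ, nrm (-x) = nrm x)
    (hntri : ∀ x y : Fin d → ℝ, nrm (x + y) ≤ nrm x + nrm y)
    (c₁ c₂ : ℝ) (hc₁ : 0 < c₁) (hc₂ : 0 < c₂)
    (hvol : ∀ r : ℝ, 0 < r →
      c₁ * r ^ sdim ≤ (volume {y : Fin d → ℝ | nrm y ≤ r}).toReal ∧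
        (volume {y : Fin d → ℝ | nrm y ≤ r}).toReal ≤ c₂ * r ^ sdim)
    (α γ γ' : ℝ) (hα : α ≤ 0) (hγ : γ ≤ 0) (hγ' : γ' ≤ 0)
    (h1 : -sdim < γ + γ') (h2 : -sdim < α + γ) (h3 : α + γ + γ' < -sdim) :
    ∃ C : ℝ, 0 < C ∧ ∀ a : ℝ, 0 ≤ a → ∀ x z : Fin d → ℝ, z ≠ x →
      ∫⁻ y, ENNReal.ofReal ((a + nrm (x - y)) ^ α * nrm (x - y) ^ γ * nrm (y - z) ^ γ')
        ≤ ENNReal.ofReal ((C * (a + nrm (x - z)) ^ (α + γ + γ' + sdim))) := by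
  classical
  have hnn : ∀ v : Fin d → ℝ, 0 ≤ nrm v := by
    intro v
    by_cases h : v = 0
    · simp [h, hn0]
    · exact (hnpos v h).le
  have hq1 : 0 < α + γ + sdim := by linarith
  have hq2 : 0 < γ' + sdim := by linarith
  have hp : 0 < γ + γ' + sdim := by linarith
  have he : α + γ + γ' + sdim < 0 := by linarith
  obtain ⟨CA, hCA, HA⟩ := kc_sumA sdim α γ γ' c₂ hc₂ hα hγ' hq1 hp
  obtain ⟨CB, hCB, HB⟩ := kc_sumB sdim α γ γ' c₂ hc₂ hα hq2 hp
  obtain ⟨CC, hCC, HC⟩ := kc_sumC sdim α γ γ' c₂ hc₂ hα hp he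
  refine ⟨CA + CB + CC, by positivity, ?_⟩
  intro a ha x z hzx
  have hxz : x - z ≠ 0 := sub_ne_zero.mpr (Ne.symm hzx)
  set r := nrm (x - z) with hrdef
  have hr : 0 < r := hnpos _ hxz
  have hw0 : 0 < a + r := by positivity
  -- dimension is positive
  have hne : Nonempty (Fin d) := by
    rcases Nat.eq_zero_or_pos d with hd | hd
    · exfalso; subst hd; exact hzx (Subsingleton.elim z x)
    · exact ⟨⟨0, hd⟩⟩
  obtain ⟨i0⟩ := hne
  have hsing : ∀ v : Fin d → ℝ, volume ({v} : Set (Fin d → ℝ)) = 0 := by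
    intro v
    rw [← Set.univ_pi_singleton v, volume_pi_pi]
    exact Finset.prod_eq_zero (Finset.mem_univ i0) Real.volume_singleton
  have hN0 : volume ({x} ∪ {z} : Set (Fin d → ℝ)) = 0 :=
    measure_union_null (hsing x) (hsing z)
  -- ball volume bounds
  have hballabs : ∀ R : ℝ, 0 < R →
      volume {v : Fin d → ℝ | nrm v ≤ R} ≤ ENNReal.ofReal (c₂ * R ^ sdim) := by
    intro R hR
    obtain ⟨hlo, hhi⟩ := hvol R hR
    have hfin : volume {v : Fin d → ℝ | nrm v ≤ R} ≠ ⊤ := by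
      intro htop
      rw [htop] at hlo
      simp only [ENNReal.toReal_top] at hlo
      nlinarith [Real.rpow_pos_of_pos hR sdim]
    rw [← ENNReal.ofReal_toReal hfin]
    exact ENNReal.ofReal_le_ofReal hhi
  have hballx : ∀ R : ℝ, 0 < R →
      volume {y : Fin d → ℝ | nrm (x - y) ≤ R} ≤ ENNReal.ofReal (c₂ * R ^ sdim) := by
    intro R hR
    have hpre : {y : Fin d → ℝ | nrm (x - y) ≤ R}
        ⊆ (fun y => x - y) ⁻¹' (toMeasurable volume {v : Fin d → ℝ | nrm v ≤ R}) :=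
      fun y hy => subset_toMeasurable _ _ hy
    calc volume {y : Fin d → ℝ | nrm (x - y) ≤ R}
        ≤ volume ((fun y => x - y) ⁻¹'
            (toMeasurable volume {v : Fin d → ℝ | nrm v ≤ R})) := measure_mono hpre
      _ = volume (toMeasurable volume {v : Fin d → ℝ | nrm v ≤ R}) :=
          (Measure.measurePreserving_sub_left volume x).measure_preimage
            (measurableSet_toMeasurable _ _).nullMeasurableSet
      _ = volume {v : Fin d → ℝ | nrm v ≤ R} := measure_toMeasurable _
      _ ≤ ENNReal.ofReal (c₂ * R ^ sdim) := hballabs R hR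
  have hballz : ∀ R : ℝ, 0 < R →
      volume {y : Fin d → ℝ | nrm (y - z) ≤ R} ≤ ENNReal.ofReal (c₂ * R ^ sdim) := by
    intro R hR
    have hpre : {y : Fin d → ℝ | nrm (y - z) ≤ R}
        ⊆ (fun y => y - z) ⁻¹' (toMeasurable volume {v : Fin d → ℝ | nrm v ≤ R}) :=
      fun y hy => subset_toMeasurable _ _ hy
    calc volume {y : Fin d → ℝ | nrm (y - z) ≤ R}
        ≤ volume ((fun y => y - z) ⁻¹'
            (toMeasurable volume {v : Fin d → ℝ | nrm v ≤ R})) := measure_mono hpre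
      _ = volume (toMeasurable volume {v : Fin d → ℝ | nrm v ≤ R}) :=
          (measurePreserving_sub_right volume z).measure_preimage
            (measurableSet_toMeasurable _ _).nullMeasurableSet
      _ = volume {v : Fin d → ℝ | nrm v ≤ R} := measure_toMeasurable _
      _ ≤ ENNReal.ofReal (c₂ * R ^ sdim) := hballabs R hR
  -- triangle inequalities
  have tri1 : ∀ y : Fin d → ℝ, r ≤ nrm (x - y) + nrm (y - z) := by
    intro y
    have h := hntri (x - y) (y - z)
    rwa [show x - y + (y - z) = x - z by abel] at h
  have tri2 : ∀ y : Fin d → ℝ, nrm (x - y) ≤ r + nrm (y - z) := by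
    intro y
    have h := hntri (x - z) (z - y)
    rw [show x - z + (z - y) = x - y by abel] at h
    rwa [show z - y = -(y - z) by abel, hnsymm] at h
  -- coverage with value bounds
  have hcover : ∀ y : Fin d → ℝ, y ∉ ({x} ∪ {z} : Set (Fin d → ℝ)) →
      (∃ k : ℕ, y ∈ {y' : Fin d → ℝ | r * (1/2 : ℝ) ^ (k+2) < nrm (x - y')
          ∧ nrm (x - y') ≤ r * (1/2 : ℝ) ^ (k+1)} ∧
        ENNReal.ofReal ((a + nrm (x - y)) ^ α * nrm (x - y) ^ γ * nrm (y - z) ^ γ')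
          ≤ ENNReal.ofReal ((a + r * (1/2 : ℝ) ^ (k+2)) ^ α
              * (r * (1/2 : ℝ) ^ (k+2)) ^ γ * (r/2) ^ γ')) ∨
      (∃ k : ℕ, y ∈ {y' : Fin d → ℝ | r * (1/2 : ℝ) ^ (k+2) < nrm (y' - z)
          ∧ nrm (y' - z) ≤ r * (1/2 : ℝ) ^ (k+1)} ∧
        ENNReal.ofReal ((a + nrm (x - y)) ^ α * nrm (x - y) ^ γ * nrm (y - z) ^ γ')
          ≤ ENNReal.ofReal ((a + r/2) ^ α * (r/2) ^ γ
              * (r * (1/2 : ℝ) ^ (k+2)) ^ γ')) ∨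
      (∃ k : ℕ, y ∈ {y' : Fin d → ℝ | r/2 * 2 ^ k < nrm (x - y')
          ∧ nrm (x - y') ≤ r/2 * 2 ^ (k+1) ∧ r/2 < nrm (y' - z)} ∧
        ENNReal.ofReal ((a + nrm (x - y)) ^ α * nrm (x - y) ^ γ * nrm (y - z) ^ γ')
          ≤ ENNReal.ofReal ((a + r/2 * 2 ^ k) ^ α * (r/2 * 2 ^ k) ^ γ
              * (r/2 * 2 ^ k / 4) ^ γ')) := by
    intro y hy
    simp only [Set.mem_union, Set.mem_singleton_iff] at hy
    push_neg at hy
    obtain ⟨hyx, hyz⟩ := hy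
    have hs : 0 < nrm (x - y) := hnpos _ (sub_ne_zero.mpr (Ne.symm hyx))
    have ht : 0 < nrm (y - z) := hnpos _ (sub_ne_zero.mpr hyz)
    set s := nrm (x - y) with hsdef
    set t := nrm (y - z) with htdef
    rcases le_or_gt s (r/2) with hsr | hsr
    · -- region A
      left
      have hex : ∃ k : ℕ, r * (1/2 : ℝ) ^ (k+2) < s := by
        obtain ⟨n, hn⟩ := pow_unbounded_of_one_lt (r / s) (by norm_num : (1:ℝ) < 2)
        refine ⟨n, ?_⟩
        rw [div_lt_iff₀ hs] at hn
        have hh : r * (1/2 : ℝ) ^ n < s := by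
          have h2 : ((1:ℝ)/2) ^ n = ((2:ℝ) ^ n)⁻¹ := by
            rw [div_pow, one_pow, inv_eq_one_div]
          rw [h2]
          have hpos : (0:ℝ) < (2:ℝ) ^ n := by positivity
          rw [mul_inv_lt_iff₀ hpos]
          linarith [hn]
        have hmono : r * (1/2 : ℝ) ^ (n+2) ≤ r * (1/2 : ℝ) ^ n := by
          have := pow_le_pow_of_le_one (by norm_num : (0:ℝ) ≤ 1/2)
            (by norm_num : (1/2:ℝ) ≤ 1) (by omega : n ≤ n + 2)
          nlinarith
        linarith
      have hlow : r * (1/2 : ℝ) ^ (Nat.find hex + 2) < s := Nat.find_spec hex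
      have hup : s ≤ r * (1/2 : ℝ) ^ (Nat.find hex + 1) := by
        by_cases hK0 : Nat.find hex = 0
        · rw [hK0]
          norm_num
          linarith
        · have hj := Nat.find_min hex (show Nat.find hex - 1 < Nat.find hex by omega)
          push_neg at hj
          have heq : Nat.find hex - 1 + 2 = Nat.find hex + 1 := by omega
          rwa [heq] at hj
      refine ⟨Nat.find hex, ⟨hlow, hup⟩, ?_⟩
      refine ENNReal.ofReal_le_ofReal ?_
      have htr2 : r/2 ≤ t := by
        have h' := tri1 y
        rw [← hsdef, ← htdef] at h'
        linarith
      have b1 : (a + s) ^ α ≤ (a + r * (1/2 : ℝ) ^ (Nat.find hex + 2)) ^ α :=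
        Real.rpow_le_rpow_of_nonpos (by positivity) (by linarith) hα
      have b2 : s ^ γ ≤ (r * (1/2 : ℝ) ^ (Nat.find hex + 2)) ^ γ :=
        Real.rpow_le_rpow_of_nonpos (by positivity) hlow.le hγ
      have b3 : t ^ γ' ≤ (r/2) ^ γ' :=
        Real.rpow_le_rpow_of_nonpos (by positivity) htr2 hγ'
      exact mul_le_mul (mul_le_mul b1 b2 (Real.rpow_nonneg hs.le γ) (by positivity))
        b3 (Real.rpow_nonneg ht.le γ') (by positivity)
    · rcases le_or_gt t (r/2) with htr | htr
      · -- region B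
        right; left
        have hex : ∃ k : ℕ, r * (1/2 : ℝ) ^ (k+2) < t := by
          obtain ⟨n, hn⟩ := pow_unbounded_of_one_lt (r / t) (by norm_num : (1:ℝ) < 2)
          refine ⟨n, ?_⟩
          rw [div_lt_iff₀ ht] at hn
          have hh : r * (1/2 : ℝ) ^ n < t := by
            have h2 : ((1:ℝ)/2) ^ n = ((2:ℝ) ^ n)⁻¹ := by
              rw [div_pow, one_pow, inv_eq_one_div]
            rw [h2]
            have hpos : (0:ℝ) < (2:ℝ) ^ n := by positivity
            rw [mul_inv_lt_iff₀ hpos]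
            linarith [hn]
          have hmono : r * (1/2 : ℝ) ^ (n+2) ≤ r * (1/2 : ℝ) ^ n := by
            have := pow_le_pow_of_le_one (by norm_num : (0:ℝ) ≤ 1/2)
              (by norm_num : (1/2:ℝ) ≤ 1) (by omega : n ≤ n + 2)
            nlinarith
          linarith
        have hlow : r * (1/2 : ℝ) ^ (Nat.find hex + 2) < t := Nat.find_spec hex
        have hup : t ≤ r * (1/2 : ℝ) ^ (Nat.find hex + 1) := by
          by_cases hK0 : Nat.find hex = 0
          · rw [hK0]
            norm_num
            linarith
          · have hj := Nat.find_min hex (show Nat.find hex - 1 < Nat.find hex by omega)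
            push_neg at hj
            have heq : Nat.find hex - 1 + 2 = Nat.find hex + 1 := by omega
            rwa [heq] at hj
        refine ⟨Nat.find hex, ⟨hlow, hup⟩, ?_⟩
        refine ENNReal.ofReal_le_ofReal ?_
        have hsr2 : r/2 ≤ s := by
          have h' := tri1 y
          rw [← hsdef, ← htdef] at h'
          linarith
        have b1 : (a + s) ^ α ≤ (a + r/2) ^ α :=
          Real.rpow_le_rpow_of_nonpos (by positivity) (by linarith) hα
        have b2 : s ^ γ ≤ (r/2) ^ γ :=
          Real.rpow_le_rpow_of_nonpos (by positivity) hsr2 hγ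
        have b3 : t ^ γ' ≤ (r * (1/2 : ℝ) ^ (Nat.find hex + 2)) ^ γ' :=
          Real.rpow_le_rpow_of_nonpos (by positivity) hlow.le hγ'
        exact mul_le_mul (mul_le_mul b1 b2 (Real.rpow_nonneg hs.le γ) (by positivity))
          b3 (Real.rpow_nonneg ht.le γ') (by positivity)
      · -- region C
        right; right
        have hex : ∃ k : ℕ, s ≤ r/2 * 2 ^ (k+1) := by
          obtain ⟨n, hn⟩ := pow_unbounded_of_one_lt (s / (r/2)) (by norm_num : (1:ℝ) < 2)
          refine ⟨n, ?_⟩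
          rw [div_lt_iff₀ (by positivity : (0:ℝ) < r/2)] at hn
          have hle : (2:ℝ) ^ n ≤ 2 ^ (n+1) := by
            apply pow_le_pow_right₀ (by norm_num) (by omega)
          nlinarith
        have hup : s ≤ r/2 * 2 ^ (Nat.find hex + 1) := Nat.find_spec hex
        have hlow : r/2 * 2 ^ (Nat.find hex) < s := by
          by_cases hK0 : Nat.find hex = 0
          · rw [hK0]
            norm_num
            linarith
          · have hj := Nat.find_min hex (show Nat.find hex - 1 < Nat.find hex by omega)
            push_neg at hj
            have heq : Nat.find hex - 1 + 1 = Nat.find hex := by omega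
            rwa [heq] at hj
        refine ⟨Nat.find hex, ⟨hlow, hup, htr⟩, ?_⟩
        refine ENNReal.ofReal_le_ofReal ?_
        have ht4 : s/4 ≤ t := by
          rcases le_or_gt s (2*r) with hc1 | hc1
          · linarith
          · have h' := tri2 y
            rw [← hsdef, ← htdef] at h'
            linarith
        have hLt : r/2 * 2 ^ (Nat.find hex) / 4 ≤ t := by
          linarith
        have b1 : (a + s) ^ α ≤ (a + r/2 * 2 ^ (Nat.find hex)) ^ α :=
          Real.rpow_le_rpow_of_nonpos (by positivity) (by linarith) hα
        have b2 : s ^ γ ≤ (r/2 * 2 ^ (Nat.find hex)) ^ γ :=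
          Real.rpow_le_rpow_of_nonpos (by positivity) hlow.le hγ
        have b3 : t ^ γ' ≤ (r/2 * 2 ^ (Nat.find hex) / 4) ^ γ' :=
          Real.rpow_le_rpow_of_nonpos (by positivity) hLt hγ'
        exact mul_le_mul (mul_le_mul b1 b2 (Real.rpow_nonneg hs.le γ) (by positivity))
          b3 (Real.rpow_nonneg ht.le γ') (by positivity)
  -- measure bounds for the families
  have hmA : ∀ k : ℕ, volume {y' : Fin d → ℝ | r * (1/2 : ℝ) ^ (k+2) < nrm (x - y')
      ∧ nrm (x - y') ≤ r * (1/2 : ℝ) ^ (k+1)}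
      ≤ ENNReal.ofReal (c₂ * (r * (1/2 : ℝ) ^ (k+1)) ^ sdim) := by
    intro k
    refine le_trans (measure_mono ?_) (hballx (r * (1/2 : ℝ) ^ (k+1)) (by positivity))
    intro y hy
    exact hy.2
  have hmB : ∀ k : ℕ, volume {y' : Fin d → ℝ | r * (1/2 : ℝ) ^ (k+2) < nrm (y' - z)
      ∧ nrm (y' - z) ≤ r * (1/2 : ℝ) ^ (k+1)}
      ≤ ENNReal.ofReal (c₂ * (r * (1/2 : ℝ) ^ (k+1)) ^ sdim) := by
    intro k
    refine le_trans (measure_mono ?_) (hballz (r * (1/2 : ℝ) ^ (k+1)) (by positivity))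
    intro y hy
    exact hy.2
  have hmC : ∀ k : ℕ, volume {y' : Fin d → ℝ | r/2 * 2 ^ k < nrm (x - y')
      ∧ nrm (x - y') ≤ r/2 * 2 ^ (k+1) ∧ r/2 < nrm (y' - z)}
      ≤ ENNReal.ofReal (c₂ * (r/2 * 2 ^ (k+1)) ^ sdim) := by
    intro k
    refine le_trans (measure_mono ?_) (hballx (r/2 * 2 ^ (k+1)) (by positivity))
    intro y hy
    exact hy.2.1
  -- tsum bounds
  have htsumA : ∑' k : ℕ, ENNReal.ofReal ((a + r * (1/2 : ℝ) ^ (k+2)) ^ α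
        * (r * (1/2 : ℝ) ^ (k+2)) ^ γ * (r/2) ^ γ')
      * volume {y' : Fin d → ℝ | r * (1/2 : ℝ) ^ (k+2) < nrm (x - y')
        ∧ nrm (x - y') ≤ r * (1/2 : ℝ) ^ (k+1)}
      ≤ ENNReal.ofReal (CA * (a + r) ^ (α + γ + γ' + sdim)) := by
    refine kc_tsum_bound volume _ _ (fun k => c₂ * (r * (1/2 : ℝ) ^ (k+1)) ^ sdim)
      (fun k => by positivity) (fun k => by positivity) hmA _ (fun F => HA a r ha hr F)
  have htsumB : ∑' k : ℕ, ENNReal.ofReal ((a + r/2) ^ α * (r/2) ^ γ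
        * (r * (1/2 : ℝ) ^ (k+2)) ^ γ')
      * volume {y' : Fin d → ℝ | r * (1/2 : ℝ) ^ (k+2) < nrm (y' - z)
        ∧ nrm (y' - z) ≤ r * (1/2 : ℝ) ^ (k+1)}
      ≤ ENNReal.ofReal (CB * (a + r) ^ (α + γ + γ' + sdim)) := by
    refine kc_tsum_bound volume _ _ (fun k => c₂ * (r * (1/2 : ℝ) ^ (k+1)) ^ sdim)
      (fun k => by positivity) (fun k => by positivity) hmB _ (fun F => HB a r ha hr F)
  have htsumC : ∑' k : ℕ, ENNReal.ofReal ((a + r/2 * 2 ^ k) ^ α * (r/2 * 2 ^ k) ^ γ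
        * (r/2 * 2 ^ k / 4) ^ γ')
      * volume {y' : Fin d → ℝ | r/2 * 2 ^ k < nrm (x - y')
        ∧ nrm (x - y') ≤ r/2 * 2 ^ (k+1) ∧ r/2 < nrm (y' - z)}
      ≤ ENNReal.ofReal (CC * (a + r) ^ (α + γ + γ' + sdim)) := by
    refine kc_tsum_bound volume _ _ (fun k => c₂ * (r/2 * 2 ^ (k+1)) ^ sdim)
      (fun k => by positivity) (fun k => by positivity) hmC _ (fun F => HC a r ha hr F)
  -- assemble
  calc ∫⁻ y, ENNReal.ofReal ((a + nrm (x - y)) ^ α * nrm (x - y) ^ γ * nrm (y - z) ^ γ')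
      ≤ (∑' k : ℕ, ENNReal.ofReal ((a + r * (1/2 : ℝ) ^ (k+2)) ^ α
            * (r * (1/2 : ℝ) ^ (k+2)) ^ γ * (r/2) ^ γ')
          * volume {y' : Fin d → ℝ | r * (1/2 : ℝ) ^ (k+2) < nrm (x - y')
            ∧ nrm (x - y') ≤ r * (1/2 : ℝ) ^ (k+1)})
        + (∑' k : ℕ, ENNReal.ofReal ((a + r/2) ^ α * (r/2) ^ γ
            * (r * (1/2 : ℝ) ^ (k+2)) ^ γ')
          * volume {y' : Fin d → ℝ | r * (1/2 : ℝ) ^ (k+2) < nrm (y' - z)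
            ∧ nrm (y' - z) ≤ r * (1/2 : ℝ) ^ (k+1)})
        + (∑' k : ℕ, ENNReal.ofReal ((a + r/2 * 2 ^ k) ^ α * (r/2 * 2 ^ k) ^ γ
            * (r/2 * 2 ^ k / 4) ^ γ')
          * volume {y' : Fin d → ℝ | r/2 * 2 ^ k < nrm (x - y')
            ∧ nrm (x - y') ≤ r/2 * 2 ^ (k+1) ∧ r/2 < nrm (y' - z)}) :=
        kc_assemble3 volume
          (fun y => ENNReal.ofReal ((a + nrm (x - y)) ^ α * nrm (x - y) ^ γ
            * nrm (y - z) ^ γ'))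
          (fun k => {y' : Fin d → ℝ | r * (1/2 : ℝ) ^ (k+2) < nrm (x - y')
            ∧ nrm (x - y') ≤ r * (1/2 : ℝ) ^ (k+1)})
          (fun k => {y' : Fin d → ℝ | r * (1/2 : ℝ) ^ (k+2) < nrm (y' - z)
            ∧ nrm (y' - z) ≤ r * (1/2 : ℝ) ^ (k+1)})
          (fun k => {y' : Fin d → ℝ | r/2 * 2 ^ k < nrm (x - y')
            ∧ nrm (x - y') ≤ r/2 * 2 ^ (k+1) ∧ r/2 < nrm (y' - z)})
          (fun k => (a + r * (1/2 : ℝ) ^ (k+2)) ^ α * (r * (1/2 : ℝ) ^ (k+2)) ^ γ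
            * (r/2) ^ γ')
          (fun k => (a + r/2) ^ α * (r/2) ^ γ * (r * (1/2 : ℝ) ^ (k+2)) ^ γ')
          (fun k => (a + r/2 * 2 ^ k) ^ α * (r/2 * 2 ^ k) ^ γ * (r/2 * 2 ^ k / 4) ^ γ')
          ({x} ∪ {z}) hN0 hcover
    _ ≤ ENNReal.ofReal (CA * (a + r) ^ (α + γ + γ' + sdim))
        + ENNReal.ofReal (CB * (a + r) ^ (α + γ + γ' + sdim))
        + ENNReal.ofReal (CC * (a + r) ^ (α + γ + γ' + sdim)) :=
        add_le_add (add_le_add htsumA htsumB) htsumC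
    _ = ENNReal.ofReal ((CA + CB + CC) * (a + r) ^ (α + γ + γ' + sdim)) := by
        rw [← ENNReal.ofReal_add (by positivity) (by positivity),
          ← ENNReal.ofReal_add (by positivity) (by positivity)]
        congr 1
        ring

set_option maxHeartbeats 1000000 in
/-- Kernel convolution lemma, part (ii): if
`|K(x,y)| ≤ A (|x|_∂ + ‖x-y‖)^α ‖x-y‖^γ` and `|K̄(y,z)| ≤ B ‖y-z‖^γ̄`, with
`γ + γ̄ > -|𝔰|`, `α + γ > -|𝔰|`, `α + γ + γ̄ < -|𝔰|`, then the convolution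
`K̃(x,z) = ∫ K(x,y) K̄(y,z) dy` converges absolutely and satisfies
`|K̃(x,z)| ≤ C A B (|x|_∂ + ‖x-z‖)^{α+γ+γ̄+|𝔰|}`. -/
theorem kernel_convolution_ii (d : ℕ) (sdim : ℝ) (hsdim : 0 < sdim)
    (nrm : (Fin d → ℝ) → ℝ)
    (hn0 : nrm 0 = 0) (hnpos : ∀ x : Fin d → ℝ, x ≠ 0 → 0 < nrm x)
    (hnsymm : ∀ x : Fin d → ℝ, nrm (-x) = nrm x)
    (hntri : ∀ x y : Fin d → ℝ, nrm (x + y) ≤ nrm x + nrm y)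
    (hvol : ∃ c₁ c₂ : ℝ, 0 < c₁ ∧ 0 < c₂ ∧ ∀ r : ℝ, 0 < r →
      c₁ * r ^ sdim ≤ (volume {y : Fin d → ℝ | nrm y ≤ r}).toReal ∧
        (volume {y : Fin d → ℝ | nrm y ≤ r}).toReal ≤ c₂ * r ^ sdim)
    (P : Set (Fin d → ℝ)) (hP : IsClosed P)
    (dP : (Fin d → ℝ) → ℝ)
    (hdP : ∀ x, dP x = sInf ((fun p => nrm (x - p)) '' P))
    (α γ γ' : ℝ) (hα : α ≤ 0) (hγ : γ ≤ 0) (hγ' : γ' ≤ 0)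
    (h1 : -sdim < γ + γ') (h2 : -sdim < α + γ) (h3 : α + γ + γ' < -sdim) :
    ∃ C : ℝ, 0 < C ∧ ∀ A B : ℝ, 0 ≤ A → 0 ≤ B →
      ∀ K K' : (Fin d → ℝ) → (Fin d → ℝ) → ℝ,
        Measurable (Function.uncurry K) → Measurable (Function.uncurry K') →
        (∀ x, x ∉ P → ∀ y, y ≠ x →
          |K x y| ≤ A * (dP x + nrm (x - y)) ^ α * nrm (x - y) ^ γ) →
        (∀ y z : Fin d → ℝ, z ≠ y → |K' y z| ≤ B * nrm (y - z) ^ γ') →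
        ∀ x, x ∉ P → ∀ z, z ≠ x →
          Integrable (fun y => K x y * K' y z) ∧
          |∫ y, K x y * K' y z|
            ≤ C * A * B * (dP x + nrm (x - z)) ^ (α + γ + γ' + sdim) := by
  classical
  obtain ⟨c₁, c₂, hc₁, hc₂, hvol'⟩ := hvol
  have hnn : ∀ v : Fin d → ℝ, 0 ≤ nrm v := by
    intro v
    by_cases h : v = 0
    · simp [h, hn0]
    · exact (hnpos v h).le
  obtain ⟨C, hC0, hmain⟩ := kc_main d sdim hsdim nrm hn0 hnpos hnsymm hntri c₁ c₂ hc₁ hc₂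
    hvol' α γ γ' hα hγ hγ' h1 h2 h3
  refine ⟨C, hC0, ?_⟩
  intro A B hA hB K K' hKm hK'm hK hK' x hx z hzx
  set a := dP x with hadef
  have ha : 0 ≤ a := by
    rw [hadef, hdP]
    apply Real.sInf_nonneg
    rintro v ⟨pp, -, rfl⟩
    exact hnn _
  set r := nrm (x - z) with hrdef
  have hxz : x - z ≠ 0 := sub_ne_zero.mpr (Ne.symm hzx)
  have hr : 0 < r := hnpos _ hxz
  have hw0 : 0 < a + r := by positivity
  -- measurability of the product
  have mK : Measurable fun y => K x y := hKm.comp (measurable_const.prodMk measurable_id)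
  have mK' : Measurable fun y => K' y z := hK'm.comp (measurable_id.prodMk measurable_const)
  have mprod : Measurable fun y => K x y * K' y z := mK.mul mK'
  -- dimension positive, singletons null
  have hne : Nonempty (Fin d) := by
    rcases Nat.eq_zero_or_pos d with hd | hd
    · exfalso; subst hd; exact hzx (Subsingleton.elim z x)
    · exact ⟨⟨0, hd⟩⟩
  obtain ⟨i0⟩ := hne
  have hsing : ∀ v : Fin d → ℝ, volume ({v} : Set (Fin d → ℝ)) = 0 := by
    intro v
    rw [← Set.univ_pi_singleton v, volume_pi_pi]
    exact Finset.prod_eq_zero (Finset.mem_univ i0) Real.volume_singleton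
  have hN0 : volume ({x} ∪ {z} : Set (Fin d → ℝ)) = 0 :=
    measure_union_null (hsing x) (hsing z)
  -- pointwise a.e. bound
  have hptwise : ∀ᵐ y, ENNReal.ofReal ‖K x y * K' y z‖
      ≤ ENNReal.ofReal (A * B)
        * ENNReal.ofReal ((a + nrm (x - y)) ^ α * nrm (x - y) ^ γ * nrm (y - z) ^ γ') := by
    refine (measure_eq_zero_iff_ae_notMem.mp hN0).mono fun y hy => ?_
    simp only [Set.mem_union, Set.mem_singleton_iff] at hy
    push_neg at hy
    obtain ⟨hyx, hyz⟩ := hy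
    have hKb := hK x hx y hyx
    have hK'b := hK' y z (Ne.symm hyz)
    have habs : ‖K x y * K' y z‖
        ≤ (A * B) * ((a + nrm (x - y)) ^ α * nrm (x - y) ^ γ * nrm (y - z) ^ γ') := by
      rw [Real.norm_eq_abs, abs_mul]
      have h0 : 0 ≤ A * (a + nrm (x - y)) ^ α * nrm (x - y) ^ γ := by
        have h1' := hnn (x - y)
        positivity
      calc |K x y| * |K' y z|
          ≤ (A * (a + nrm (x - y)) ^ α * nrm (x - y) ^ γ) * (B * nrm (y - z) ^ γ') :=
            mul_le_mul hKb hK'b (abs_nonneg _) h0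
        _ = (A * B) * ((a + nrm (x - y)) ^ α * nrm (x - y) ^ γ * nrm (y - z) ^ γ') := by
            ring
    calc ENNReal.ofReal ‖K x y * K' y z‖
        ≤ ENNReal.ofReal ((A * B)
            * ((a + nrm (x - y)) ^ α * nrm (x - y) ^ γ * nrm (y - z) ^ γ')) :=
          ENNReal.ofReal_le_ofReal habs
      _ = _ := ENNReal.ofReal_mul (by positivity)
  have hbound : ∫⁻ y, ENNReal.ofReal ‖K x y * K' y z‖
      ≤ ENNReal.ofReal (A * B * (C * (a + r) ^ (α + γ + γ' + sdim))) := by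
    calc ∫⁻ y, ENNReal.ofReal ‖K x y * K' y z‖
        ≤ ∫⁻ y, ENNReal.ofReal (A * B)
            * ENNReal.ofReal ((a + nrm (x - y)) ^ α * nrm (x - y) ^ γ * nrm (y - z) ^ γ') :=
          lintegral_mono_ae hptwise
      _ = ENNReal.ofReal (A * B) * ∫⁻ y,
            ENNReal.ofReal ((a + nrm (x - y)) ^ α * nrm (x - y) ^ γ * nrm (y - z) ^ γ') :=
          lintegral_const_mul' _ _ ENNReal.ofReal_ne_top
      _ ≤ ENNReal.ofReal (A * B)
            * ENNReal.ofReal (C * (a + r) ^ (α + γ + γ' + sdim)) :=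
          mul_le_mul_right (hmain a ha x z hzx) _
      _ = ENNReal.ofReal (A * B * (C * (a + r) ^ (α + γ + γ' + sdim))) :=
          (ENNReal.ofReal_mul (by positivity)).symm
  have hint : Integrable (fun y => K x y * K' y z) := by
    refine ⟨mprod.aestronglyMeasurable, ?_⟩
    rw [hasFiniteIntegral_iff_norm]
    exact lt_of_le_of_lt hbound ENNReal.ofReal_lt_top
  refine ⟨hint, ?_⟩
  have hnorm : ‖∫ y, K x y * K' y z‖
      ≤ (∫⁻ y, ENNReal.ofReal ‖K x y * K' y z‖).toReal :=
    norm_integral_le_lintegral_norm _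
  calc |∫ y, K x y * K' y z| = ‖∫ y, K x y * K' y z‖ := (Real.norm_eq_abs _).symm
    _ ≤ (∫⁻ y, ENNReal.ofReal ‖K x y * K' y z‖).toReal := hnorm
    _ ≤ (ENNReal.ofReal (A * B * (C * (a + r) ^ (α + γ + γ' + sdim)))).toReal :=
        ENNReal.toReal_mono ENNReal.ofReal_ne_top hbound
    _ = A * B * (C * (a + r) ^ (α + γ + γ' + sdim)) :=
        ENNReal.toReal_ofReal (by positivity)
    _ = C * A * B * (a + r) ^ (α + γ + γ' + sdim) := by ring
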